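/- Let G = (V,E) be a finite simple graph admitting a bcc-k-completion, suppose that for every pair of nonadjacent vertices u, v of G at most k vertices w are such that {u, v, w} is an independent set of size 3 and at most k induced 4-cycles of G contain both u and v (as a nonadjacent pair), and suppose every bcc-clean simple K-join of G has at most 2(k + 1) vertices. Then every simple K-join of G has at most 3k^2 + 6k + 2 vertices. -/

import Mathlib

open SimpleGraph Finset

variable {V : Type*}

/-- `f` is an (injective, hence linear) umbrella ordering of the graph `G`. -/
def IsUmbrellaOrdering (G : SimpleGraph V) (f : V → ℕ) : Prop :=
  Function.Injective f ∧
    ∀ u v w : V, f u < f v → f v < f w → G.Adj u w → G.Adj u v ∧ G.Adj v w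

/-- A graph is a proper interval graph iff it admits an umbrella ordering. -/
def IsProperIntervalGraph (G : SimpleGraph V) : Prop :=
  ∃ f : V → ℕ, IsUmbrellaOrdering G f

/-- The graph `G + F` obtained by adding the set `F` of pairs as edges. -/
def addEdges (G : SimpleGraph V) (F : Finset (Sym2 V)) : SimpleGraph V :=
  G ⊔ SimpleGraph.fromEdgeSet ↑F

/-- `F` is a completion of `G`: a set of non-loop non-edges whose addition
makes `G` a proper interval graph. -/
def IsCompletion (G : SimpleGraph V) (F : Finset (Sym2 V)) : Prop :=
  (∀ e ∈ F, ¬ e.IsDiag) ∧ (∀ e ∈ F, e ∉ G.edgeSet) ∧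
    IsProperIntervalGraph (addEdges G F)

/-- `F` is a `k`-completion of `G`. -/
def IsKCompletion (G : SimpleGraph V) (k : ℕ) (F : Finset (Sym2 V)) : Prop :=
  IsCompletion G F ∧ F.card ≤ k

/-- `uv` is an extremal edge of `G` with respect to the ordering `f`. -/
def IsExtremalEdge (G : SimpleGraph V) (f : V → ℕ) (u v : V) : Prop :=
  G.Adj u v ∧ f u < f v ∧
    ∀ u' v' : V, G.Adj u' v' → f u' ≤ f u → f v ≤ f v' → u' = u ∧ v' = v

/-- `c` is the center and `l₁, l₂, l₃` the leaves of an induced claw of `G`. -/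
def IsClaw (G : SimpleGraph V) (c l₁ l₂ l₃ : V) : Prop :=
  G.Adj c l₁ ∧ G.Adj c l₂ ∧ G.Adj c l₃ ∧
    ¬ G.Adj l₁ l₂ ∧ ¬ G.Adj l₁ l₃ ∧ ¬ G.Adj l₂ l₃ ∧ l₁ ≠ l₂ ∧ l₁ ≠ l₃ ∧ l₂ ≠ l₃

/-- `a b c d` is an induced 4-cycle of `G` (in this cyclic order). -/
def IsInducedC4 (G : SimpleGraph V) (a b c d : V) : Prop :=
  G.Adj a b ∧ G.Adj b c ∧ G.Adj c d ∧ G.Adj d a ∧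
    ¬ G.Adj a c ∧ ¬ G.Adj b d ∧ a ≠ c ∧ b ≠ d

/-- `x` belongs to some claw of `G` (as center or leaf). -/
def InClaw (G : SimpleGraph V) (x : V) : Prop :=
  ∃ a b c d, IsClaw G a b c d ∧ (x = a ∨ x = b ∨ x = c ∨ x = d)

/-- `x` belongs to some induced 4-cycle of `G`. -/
def InC4 (G : SimpleGraph V) (x : V) : Prop :=
  ∃ a b c d, IsInducedC4 G a b c d ∧ (x = a ∨ x = b ∨ x = c ∨ x = d)

/-- `{x, y, z}` is an independent set of size 3 (a `3K₁`) of `G`. -/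
def IsInd3 (G : SimpleGraph V) (x y z : V) : Prop :=
  x ≠ y ∧ x ≠ z ∧ y ≠ z ∧ ¬ G.Adj x y ∧ ¬ G.Adj x z ∧ ¬ G.Adj y z

/-- `x` belongs to some independent set of size 3 of `G`. -/
def InInd3 (G : SimpleGraph V) (x : V) : Prop := ∃ y z, IsInd3 G x y z

/-- `G` is sunflower-reduced (for the parameter `k`). -/
def SunflowerReduced (G : SimpleGraph V) (k : ℕ) : Prop :=
  ∀ u v : V, u ≠ v → ¬ G.Adj u v →
    {w : V | ∃ c, IsClaw G c u v w}.ncard ≤ k ∧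
    {e : Sym2 V | ∃ a b, e = s(a, b) ∧ IsInducedC4 G u a v b}.ncard ≤ k

/-- `u` and `v` are true twins of `G`: they have the same closed neighborhood. -/
def TrueTwins (G : SimpleGraph V) (u v : V) : Prop :=
  insert u (G.neighborSet u) = insert v (G.neighborSet v)

/-- `b : Fin p → V` enumerates a `K`-join of `G` whose complement is
partitioned into `N`, `L`, `R`, `C`. -/
structure KJoinWith (G : SimpleGraph V) {p : ℕ} (b : Fin p → V)
    (N L R C : Set V) : Prop where
  inj : Function.Injective b
  clique : ∀ i j : Fin p, i ≠ j → G.Adj (b i) (b j)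
  cover : ∀ v : V, v ∉ Set.range b → v ∈ N ∪ L ∪ R ∪ C
  disj : List.Pairwise Disjoint [Set.range b, N, L, R, C]
  nAdj : ∀ v ∈ N, ∀ i, G.Adj v (b i)
  cNotAdj : ∀ v ∈ C, ∀ i, ¬ G.Adj v (b i)
  lrAdj : ∀ v ∈ L ∪ R, ∃ i, G.Adj v (b i)
  lrNotAll : ∀ v ∈ L ∪ R, ∃ i, ¬ G.Adj v (b i)
  rFirst : ∀ r ∈ R, ∀ i : Fin p, i.val = 0 → ¬ G.Adj r (b i)
  lLast : ∀ x ∈ L, ∀ i : Fin p, i.val = p - 1 → ¬ G.Adj x (b i)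
  rMono : ∀ i j : Fin p, i.val + 1 = j.val → ∀ r ∈ R, G.Adj (b i) r → G.Adj (b j) r
  lMono : ∀ i j : Fin p, i.val + 1 = j.val → ∀ x ∈ L, G.Adj (b j) x → G.Adj (b i) x

/-- `B ⊆ V` is a `K`-join of `G`. -/
def IsKJoin (G : SimpleGraph V) (B : Set V) : Prop :=
  ∃ (p : ℕ) (b : Fin p → V) (N L R C : Set V),
    Set.range b = B ∧ KJoinWith G b N L R C

/-- `B` is a clean `K`-join: none of its vertices belongs to a claw or an
induced 4-cycle of `G`. -/
def IsCleanKJoin (G : SimpleGraph V) (B : Set V) : Prop :=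
  IsKJoin G B ∧ ∀ x ∈ B, ¬ InClaw G x ∧ ¬ InC4 G x

/-- `B ⊆ V` is a simple `K`-join of `G` (one of `L`, `R` is empty). -/
def IsSimpleKJoin (G : SimpleGraph V) (B : Set V) : Prop :=
  ∃ (p : ℕ) (b : Fin p → V) (N L R C : Set V),
    Set.range b = B ∧ KJoinWith G b N L R C ∧ (L = ∅ ∨ R = ∅)

/-- `B` is bcc-clean: none of its vertices belongs to a `3K₁` or an induced
4-cycle of `G`. -/
def IsBccClean (G : SimpleGraph V) (B : Set V) : Prop :=
  ∀ x ∈ B, ¬ InInd3 G x ∧ ¬ InC4 G x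

/-- `b : Fin p → V` enumerates (in umbrella order) a 1-branch of `G` with
complement partitioned into `R`, `C`; `b l` is the neighbor of the last
vertex `b (p-1)` of minimal index.  The attachment clique is
`B₁ = {b i : l ≤ i}` and `B^R = {b i : i < l}`. -/
structure OneBranch (G : SimpleGraph V) {p : ℕ} (b : Fin p → V)
    (R C : Set V) (l : Fin p) : Prop where
  pos : 0 < p
  inj : Function.Injective b
  umbrella : ∀ i j m : Fin p, i < j → j < m → G.Adj (b i) (b m) →
    G.Adj (b i) (b j) ∧ G.Adj (b j) (b m)
  connB : (G.induce (Set.range b)).Connected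
  cover : ∀ v : V, v ∉ Set.range b → v ∈ R ∪ C
  disj : List.Pairwise Disjoint [Set.range b, R, C]
  noBC : ∀ v ∈ C, ∀ i, ¬ G.Adj v (b i)
  rNbr : ∀ v ∈ R, ∃ i, G.Adj v (b i)
  lMin : ∀ j : Fin p, j < l → ¬ G.Adj (b j) (b ⟨p - 1, Nat.sub_lt pos Nat.one_pos⟩)
  lNbr : l.val = p - 1 ∨ G.Adj (b l) (b ⟨p - 1, Nat.sub_lt pos Nat.one_pos⟩)
  noEarlyR : ∀ j : Fin p, j < l → ∀ r ∈ R, ¬ G.Adj r (b j)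
  rMono : ∀ i j : Fin p, l ≤ i → i.val + 1 = j.val → ∀ r ∈ R,
    G.Adj (b i) r → G.Adj (b j) r

/-- `b : Fin p → V` enumerates (in umbrella order) a 2-branch of `G` with
complement partitioned into `L`, `R`, `C`; `b l` is the neighbor of `b (p-1)`
of minimal index and `b l'` is the neighbor of `b 0` of maximal index.  The
attachment cliques are `B₁ = {b i : i ≤ l'}` and `B₂ = {b i : l ≤ i}`, and
`B^R = {b i : l' < i < l}`. -/
structure TwoBranch (G : SimpleGraph V) {p : ℕ} (b : Fin p → V)
    (L R C : Set V) (l l' : Fin p) : Prop where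
  pos : 0 < p
  inj : Function.Injective b
  umbrella : ∀ i j m : Fin p, i < j → j < m → G.Adj (b i) (b m) →
    G.Adj (b i) (b j) ∧ G.Adj (b j) (b m)
  connB : (G.induce (Set.range b)).Connected
  cover : ∀ v : V, v ∉ Set.range b → v ∈ L ∪ R ∪ C
  disj : List.Pairwise Disjoint [Set.range b, L, R, C]
  noBC : ∀ v ∈ C, ∀ i, ¬ G.Adj v (b i)
  lNbrEx : ∀ v ∈ L, ∃ i, G.Adj v (b i)
  rNbrEx : ∀ v ∈ R, ∃ i, G.Adj v (b i)
  lMin : ∀ j : Fin p, j < l → ¬ G.Adj (b j) (b ⟨p - 1, Nat.sub_lt pos Nat.one_pos⟩)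
  lNbr : l.val = p - 1 ∨ G.Adj (b l) (b ⟨p - 1, Nat.sub_lt pos Nat.one_pos⟩)
  lMax' : ∀ j : Fin p, l' < j → ¬ G.Adj (b ⟨0, pos⟩) (b j)
  lNbr' : l'.val = 0 ∨ G.Adj (b ⟨0, pos⟩) (b l')
  noEarlyR : ∀ j : Fin p, j < l → ∀ r ∈ R, ¬ G.Adj r (b j)
  noLateL : ∀ j : Fin p, l' < j → ∀ v ∈ L, ¬ G.Adj v (b j)
  rMono : ∀ i j : Fin p, l ≤ i → i.val + 1 = j.val → ∀ r ∈ R,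
    G.Adj (b i) r → G.Adj (b j) r
  lMono : ∀ i j : Fin p, j ≤ l' → i.val + 1 = j.val → ∀ v ∈ L,
    G.Adj (b j) v → G.Adj (b i) v

/-- `e : Fin q → Fin p` lists the last indices of the `q` K-joins of the
K-join decomposition of the 2-branch enumerated by `b` (with attachment
cliques ending at `l'` resp. starting at `l`). -/
def KJoinDecomp (G : SimpleGraph V) {p : ℕ} (b : Fin p → V) (l l' : Fin p)
    (q : ℕ) (e : Fin q → Fin p) : Prop :=
  0 < q ∧
  (∀ i : Fin q, i.val = 0 → e i = l') ∧
  (∀ i : Fin q, i.val = q - 1 → (e i).val = p - 1) ∧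
  StrictMono e ∧
  ∀ i j : Fin q, i.val + 1 = j.val →
    ∃ hs : (e i).val + 1 < p,
      (j.val + 1 < q →
        (⟨(e i).val + 1, hs⟩ : Fin p) < l ∧
        G.Adj (b ⟨(e i).val + 1, hs⟩) (b (e j)) ∧
        ∀ m : Fin p, G.Adj (b ⟨(e i).val + 1, hs⟩) (b m) → m ≤ e j) ∧
      (j.val + 1 = q → l ≤ (⟨(e i).val + 1, hs⟩ : Fin p))

/-- `G` is a bi-clique chain graph: two cliques joined by a join. -/
def IsBicliqueChain (G : SimpleGraph V) : Prop :=
  ∃ (q : ℕ) (x : Fin q → V) (Y : Set V),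
    Function.Injective x ∧
    Disjoint (Set.range x) Y ∧
    (∀ v : V, v ∈ Set.range x ∨ v ∈ Y) ∧
    (∀ i j : Fin q, i ≠ j → G.Adj (x i) (x j)) ∧
    G.IsClique Y ∧
    (∀ i j : Fin q, i ≤ j → ∀ y ∈ Y, G.Adj (x i) y → G.Adj (x j) y)

/-- `F` is a bcc-`k`-completion of `G`. -/
def IsBccKCompletion (G : SimpleGraph V) (k : ℕ) (F : Finset (Sym2 V)) : Prop :=
  (∀ e ∈ F, ¬ e.IsDiag) ∧ (∀ e ∈ F, e ∉ G.edgeSet) ∧ F.card ≤ k ∧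
    IsBicliqueChain (addEdges G F)

lemma addEdges_adj (G : SimpleGraph V) (F : Finset (Sym2 V)) (u v : V) :
    (addEdges G F).Adj u v ↔ G.Adj u v ∨ (s(u, v) ∈ F ∧ u ≠ v) := by
  simp [addEdges, SimpleGraph.fromEdgeSet_adj]

lemma ind3_swap {G : SimpleGraph V} {a b w : V} (h : IsInd3 G a b w) : IsInd3 G b a w :=
  ⟨h.1.symm, h.2.2.1, h.2.1, fun hh => h.2.2.2.1 hh.symm, h.2.2.2.2.2, h.2.2.2.2.1⟩

lemma ind3_cycle {G : SimpleGraph V} {a b w : V} (h : IsInd3 G a b w) : IsInd3 G b w a :=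
  ⟨h.2.2.1, h.1.symm, h.2.1.symm, h.2.2.2.2.2, fun hh => h.2.2.2.1 hh.symm,
    fun hh => h.2.2.2.2.1 hh.symm⟩

lemma sym2_exists (e : Sym2 V) : ∃ a b, e = s(a,b) := by
  induction e using Sym2.ind with | _ x y => exact ⟨x, y, rfl⟩

lemma sym2_mem_ncard (y z : V) : ({x | x ∈ s(y,z)} : Set V).ncard ≤ 2 := by
  have : {x | x ∈ s(y,z)} = {y, z} := by ext x; simp [Sym2.mem_iff]
  rw [this]
  exact (Set.ncard_insert_le _ _).trans (by simp)

lemma c4_rot1' {G : SimpleGraph V} {a b c d : V} (h : IsInducedC4 G a b c d) :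
    IsInducedC4 G b c d a := by
  obtain ⟨h1, h2, h3, h4, h5, h6, h7, h8⟩ := h
  exact ⟨h2, h3, h4, h1, h6, fun hh => h5 hh.symm, h8, fun hh => h7 hh.symm⟩

lemma biUnion_ncard_le' {α β : Type*} [Finite β] (S : Set α) (hS : S.Finite)
    (f : α → Set β) (m : ℕ) (hle : ∀ a ∈ S, (f a).ncard ≤ m) :
    (⋃ a ∈ S, f a).ncard ≤ S.ncard * m := by
  revert hle
  refine Set.Finite.induction_on (motive := fun S _ => (∀ a ∈ S, (f a).ncard ≤ m) →
    (⋃ a ∈ S, f a).ncard ≤ S.ncard * m) S hS (by simp) ?_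
  intro a S ha hS ih hle
  rw [Set.biUnion_insert]
  calc (f a ∪ ⋃ x ∈ S, f x).ncard ≤ (f a).ncard + (⋃ x ∈ S, f x).ncard :=
        Set.ncard_union_le _ _
    _ ≤ m + S.ncard * m := by
        gcongr
        · exact hle a (Set.mem_insert _ _)
        · exact ih fun x hx => hle x (Set.mem_insert_of_mem _ hx)
    _ = (insert a S).ncard * m := by
        rw [Set.ncard_insert_of_notMem ha hS]; ring

lemma c4_rot1 {G : SimpleGraph V} {a b c d : V} (h : IsInducedC4 G a b c d) :
    IsInducedC4 G b c d a := by
  obtain ⟨h1, h2, h3, h4, h5, h6, h7, h8⟩ := h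
  exact ⟨h2, h3, h4, h1, h6, fun hh => h5 hh.symm, h8, fun hh => h7 hh.symm⟩

lemma c4_rot2 {G : SimpleGraph V} {a b c d : V} (h : IsInducedC4 G a b c d) :
    IsInducedC4 G c d a b := c4_rot1 (c4_rot1 h)

lemma bcc_no_ind3 {G : SimpleGraph V} (h : IsBicliqueChain G) (x y z : V) :
    ¬ IsInd3 G x y z := by
  obtain ⟨q, f, Y, hinj, hdisj, hcov, hX, hY, hmono⟩ := h
  rintro ⟨hxy, hxz, hyz, nxy, nxz, nyz⟩
  have hadj : ∀ u v : V, u ≠ v →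
      (u ∈ Set.range f ∧ v ∈ Set.range f) ∨ (u ∈ Y ∧ v ∈ Y) → G.Adj u v := by
    rintro u v huv (⟨⟨i, rfl⟩, ⟨j, rfl⟩⟩ | ⟨hu, hv⟩)
    · exact hX i j (fun hij => huv (by rw [hij]))
    · exact hY hu hv huv
  rcases hcov x with hx | hx <;> rcases hcov y with hy | hy <;>
    rcases hcov z with hz | hz
  · exact nxy (hadj x y hxy (Or.inl ⟨hx, hy⟩))
  · exact nxy (hadj x y hxy (Or.inl ⟨hx, hy⟩))
  · exact nxz (hadj x z hxz (Or.inl ⟨hx, hz⟩))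
  · exact nyz (hadj y z hyz (Or.inr ⟨hy, hz⟩))
  · exact nyz (hadj y z hyz (Or.inl ⟨hy, hz⟩))
  · exact nxz (hadj x z hxz (Or.inr ⟨hx, hz⟩))
  · exact nxy (hadj x y hxy (Or.inr ⟨hx, hy⟩))
  · exact nxy (hadj x y hxy (Or.inr ⟨hx, hy⟩))

lemma bcc_no_c4 {G : SimpleGraph V} (h : IsBicliqueChain G) (a b c d : V) :
    ¬ IsInducedC4 G a b c d := by
  obtain ⟨q, f, Y, hinj, hdisj, hcov, hX, hY, hmono⟩ := h
  -- helper: a nonadjacent distinct pair is split between X and Y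
  have split : ∀ u v : V, u ≠ v → ¬ G.Adj u v →
      (u ∈ Set.range f ∧ v ∈ Y) ∨ (u ∈ Y ∧ v ∈ Set.range f) := by
    intro u v huv hnadj
    rcases hcov u with hu | hu <;> rcases hcov v with hv | hv
    · obtain ⟨i, rfl⟩ := hu; obtain ⟨j, rfl⟩ := hv
      exact absurd (hX i j (fun hij => huv (by rw [hij]))) hnadj
    · exact Or.inl ⟨hu, hv⟩
    · exact Or.inr ⟨hu, hv⟩
    · exact absurd (hY hu hv huv) hnadj
  -- core contradiction when a ∈ X, c ∈ Y
  have core : ∀ a b c d : V, IsInducedC4 G a b c d →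
      a ∈ Set.range f → c ∈ Y → False := by
    rintro a b c d ⟨h1, h2, h3, h4, h5, h6, h7, h8⟩ ⟨i, rfl⟩ hc
    rcases split b d h8 h6 with ⟨⟨j, rfl⟩, hd⟩ | ⟨hb, ⟨j, rfl⟩⟩
    · -- a = f i, b = f j, c, d ∈ Y; adj (f i) d, adj (f j) c, ¬adj (f i) c, ¬adj(f j) d
      rcases le_total i j with hij | hij
      · exact h6 (hmono i j hij d hd h4.symm)
      · exact h5 (hmono j i hij c hc h2)
    · -- a = f i, d = f j, b, c ∈ Y; adj (f i) b, adj (f j) c, ¬adj (f i) c, ¬ adj (f j) b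
      rcases le_total i j with hij | hij
      · exact h6 (hmono i j hij b hb h1).symm
      · exact h5 (hmono j i hij c hc h3.symm)
  intro hc4
  rcases split a c hc4.2.2.2.2.2.2.1 hc4.2.2.2.2.1 with ⟨ha, hc⟩ | ⟨ha, hc⟩
  · exact core a b c d hc4 ha hc
  · exact core c d a b (c4_rot2 hc4) hc ha

lemma dirty_bound [Fintype V] (G : SimpleGraph V) (k : ℕ) (F : Finset (Sym2 V))
    (hd : ∀ e ∈ F, ¬ e.IsDiag) (hne : ∀ e ∈ F, e ∉ G.edgeSet) (hcard : F.card ≤ k)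
    (hbc : IsBicliqueChain (addEdges G F))
    (hred : ∀ u v : V, u ≠ v → ¬ G.Adj u v →
      {w : V | IsInd3 G u v w}.ncard ≤ k ∧
      {e : Sym2 V | ∃ a b : V, e = s(a, b) ∧ IsInducedC4 G u a v b}.ncard ≤ k) :
    {x : V | InInd3 G x ∨ InC4 G x}.ncard ≤ k * (3 * k + 2) := by
  classical
  set T : Sym2 V → Set V := fun e =>
    {x | x ∈ e} ∪ {w | ∃ y z, e = s(y, z) ∧ IsInd3 G y z w} ∪
      {x | ∃ u v b' d', e = s(u, v) ∧ IsInducedC4 G u b' v d' ∧ (x = b' ∨ x = d')}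
    with hT
  have hsub : {x : V | InInd3 G x ∨ InC4 G x} ⊆ ⋃ e ∈ (F : Set (Sym2 V)), T e := by
    rintro x (⟨y, z, h3⟩ | ⟨a, b, c, d, h4, hx⟩)
    · have h' := bcc_no_ind3 hbc x y z
      have hor : (addEdges G F).Adj x y ∨ (addEdges G F).Adj x z ∨
          (addEdges G F).Adj y z := by
        by_contra hcon
        push_neg at hcon
        exact h' ⟨h3.1, h3.2.1, h3.2.2.1, hcon.1, hcon.2.1, hcon.2.2⟩
      rcases hor with ha | ha | ha <;> rw [addEdges_adj] at ha
      · rcases ha with hg | ⟨hF, _⟩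
        · exact absurd hg h3.2.2.2.1
        · exact Set.mem_biUnion hF (Or.inl (Or.inl (Sym2.mem_mk_left x y)))
      · rcases ha with hg | ⟨hF, _⟩
        · exact absurd hg h3.2.2.2.2.1
        · exact Set.mem_biUnion hF (Or.inl (Or.inl (Sym2.mem_mk_left x z)))
      · rcases ha with hg | ⟨hF, _⟩
        · exact absurd hg h3.2.2.2.2.2
        · refine Set.mem_biUnion hF (Or.inl (Or.inr ⟨y, z, rfl, ?_⟩))
          exact ind3_cycle h3
    · have h' := bcc_no_c4 hbc a b c d
      have hor : (addEdges G F).Adj a c ∨ (addEdges G F).Adj b d := by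
        by_contra hcon
        push_neg at hcon
        refine h' ⟨?_, ?_, ?_, ?_, hcon.1, hcon.2, h4.2.2.2.2.2.2.1, h4.2.2.2.2.2.2.2⟩ <;>
          rw [addEdges_adj]
        · exact Or.inl h4.1
        · exact Or.inl h4.2.1
        · exact Or.inl h4.2.2.1
        · exact Or.inl h4.2.2.2.1
      rcases hor with ha | ha <;> rw [addEdges_adj] at ha
      · rcases ha with hg | ⟨hF, _⟩
        · exact absurd hg h4.2.2.2.2.1
        · rcases hx with rfl | rfl | rfl | rfl
          · exact Set.mem_biUnion hF (Or.inl (Or.inl (Sym2.mem_mk_left _ _)))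
          · exact Set.mem_biUnion hF (Or.inr ⟨a, c, x, d, rfl, h4, Or.inl rfl⟩)
          · exact Set.mem_biUnion hF (Or.inl (Or.inl (Sym2.mem_mk_right _ _)))
          · exact Set.mem_biUnion hF (Or.inr ⟨a, c, b, x, rfl, h4, Or.inr rfl⟩)
      · rcases ha with hg | ⟨hF, _⟩
        · exact absurd hg h4.2.2.2.2.2.1
        · rcases hx with rfl | rfl | rfl | rfl
          · exact Set.mem_biUnion hF (Or.inr ⟨b, d, c, x, rfl, c4_rot1' h4, Or.inr rfl⟩)
          · exact Set.mem_biUnion hF (Or.inl (Or.inl (Sym2.mem_mk_left _ _)))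
          · exact Set.mem_biUnion hF (Or.inr ⟨b, d, x, a, rfl, c4_rot1' h4, Or.inl rfl⟩)
          · exact Set.mem_biUnion hF (Or.inl (Or.inl (Sym2.mem_mk_right _ _)))
  have hTbound : ∀ e ∈ (F : Set (Sym2 V)), (T e).ncard ≤ 3 * k + 2 := by
    intro e he
    rw [Finset.mem_coe] at he
    obtain ⟨y, z, rfl⟩ := sym2_exists e
    have hyz : y ≠ z := fun h => hd _ he (by simp [Sym2.mk_isDiag_iff, h])
    have hnadj : ¬ G.Adj y z := fun h => hne _ he ((SimpleGraph.mem_edgeSet G).2 h)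
    obtain ⟨hr1, hr2⟩ := hred y z hyz hnadj
    have hq : ({w | ∃ y' z', s(y, z) = s(y', z') ∧ IsInd3 G y' z' w} : Set V).ncard ≤ k := by
      refine le_trans (Set.ncard_le_ncard ?_ (Set.toFinite _)) hr1
      rintro w ⟨y', z', heq, h3⟩
      rcases Sym2.eq_iff.1 heq with ⟨rfl, rfl⟩ | ⟨rfl, rfl⟩
      · exact h3
      · exact ind3_swap h3
    have hw : ({x | ∃ u v b' d', s(y, z) = s(u, v) ∧ IsInducedC4 G u b' v d' ∧
        (x = b' ∨ x = d')} : Set V).ncard ≤ k * 2 := by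
      have hsub2 : {x | ∃ u v b' d', s(y, z) = s(u, v) ∧ IsInducedC4 G u b' v d' ∧
          (x = b' ∨ x = d')} ⊆
          ⋃ e' ∈ {e' : Sym2 V | ∃ a b : V, e' = s(a, b) ∧ IsInducedC4 G y a z b},
            {x | x ∈ e'} := by
        rintro x ⟨u, v, b', d', heq, h4, hx⟩
        rcases Sym2.eq_iff.1 heq with ⟨rfl, rfl⟩ | ⟨rfl, rfl⟩
        · exact Set.mem_biUnion ⟨b', d', rfl, h4⟩ (Sym2.mem_iff.2 hx)
        · exact Set.mem_biUnion ⟨d', b', rfl, c4_rot2 h4⟩ (Sym2.mem_iff.2 hx.symm)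
      refine le_trans (Set.ncard_le_ncard hsub2 (Set.toFinite _)) ?_
      refine le_trans (biUnion_ncard_le' _ (Set.toFinite _) _ 2 ?_) ?_
      · intro e' _
        obtain ⟨a', b', rfl⟩ := sym2_exists e'
        exact sym2_mem_ncard a' b'
      · exact Nat.mul_le_mul_right 2 hr2
    calc (T s(y, z)).ncard ≤ ({x | x ∈ s(y, z)} ∪
          {w | ∃ y' z', s(y, z) = s(y', z') ∧ IsInd3 G y' z' w} : Set V).ncard +
          ({x | ∃ u v b' d', s(y, z) = s(u, v) ∧ IsInducedC4 G u b' v d' ∧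
            (x = b' ∨ x = d')} : Set V).ncard := Set.ncard_union_le _ _
      _ ≤ (({x | x ∈ s(y, z)} : Set V).ncard +
          ({w | ∃ y' z', s(y, z) = s(y', z') ∧ IsInd3 G y' z' w} : Set V).ncard) +
          k * 2 := by gcongr; exact Set.ncard_union_le _ _
      _ ≤ (2 + k) + k * 2 := by gcongr; exact sym2_mem_ncard y z
      _ ≤ 3 * k + 2 := by omega
  calc ({x : V | InInd3 G x ∨ InC4 G x}).ncard
      ≤ (⋃ e ∈ (F : Set (Sym2 V)), T e).ncard :=
        Set.ncard_le_ncard hsub (Set.toFinite _)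
    _ ≤ (F : Set (Sym2 V)).ncard * (3 * k + 2) :=
        biUnion_ncard_le' _ (F.finite_toSet) _ _ hTbound
    _ ≤ k * (3 * k + 2) := by
        rw [Set.ncard_coe_finset]; exact Nat.mul_le_mul_right _ hcard

lemma rClosure {G : SimpleGraph V} {p : ℕ} {b : Fin p → V} {N L R C : Set V}
    (hK : KJoinWith G b N L R C) {r : V} (hr : r ∈ R) :
    ∀ i j : Fin p, i ≤ j → G.Adj (b i) r → G.Adj (b j) r := by
  have key : ∀ (d : ℕ) (i j : Fin p), i.val + d = j.val →
      G.Adj (b i) r → G.Adj (b j) r := by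
    intro d
    induction d with
    | zero => intro i j h ha; rwa [show j = i from Fin.ext (by omega)]
    | succ n ih =>
      intro i j h ha
      have hm : i.val + n < p := by omega
      exact hK.rMono ⟨i.val + n, hm⟩ j (by show i.val + n + 1 = j.val; omega) r hr
        (ih i ⟨i.val + n, hm⟩ rfl ha)
  intro i j hij ha
  have h' : i.val ≤ j.val := hij
  exact key (j.val - i.val) i j (by omega) ha

lemma lClosure {G : SimpleGraph V} {p : ℕ} {b : Fin p → V} {N L R C : Set V}
    (hK : KJoinWith G b N L R C) {x : V} (hx : x ∈ L) :
    ∀ i j : Fin p, i ≤ j → G.Adj (b j) x → G.Adj (b i) x := by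
  have key : ∀ (d : ℕ) (i j : Fin p), i.val + d = j.val →
      G.Adj (b j) x → G.Adj (b i) x := by
    intro d
    induction d with
    | zero => intro i j h ha; rwa [show i = j from Fin.ext (by omega)]
    | succ n ih =>
      intro i j h ha
      have hm : i.val + 1 < p ∨ i.val + 1 = j.val := by omega
      have hm' : i.val + 1 < p := by
        have := j.isLt; omega
      exact hK.lMono i ⟨i.val + 1, hm'⟩ rfl x hx
        (ih ⟨i.val + 1, hm'⟩ j (by show i.val + 1 + n = j.val; omega) ha)
  intro i j hij ha
  have h' : i.val ≤ j.val := hij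
  exact key (j.val - i.val) i j (by omega) ha

lemma restrict_simpleKJoin {G : SimpleGraph V} {B : Set V}
    (hB : IsSimpleKJoin G B) (D : Set V) : IsSimpleKJoin G (B \ D) := by
  classical
  obtain ⟨p, b, N, L, R, C, hrange, hK, hLR⟩ := hB
  set s : Finset (Fin p) := Finset.univ.filter (fun i => b i ∉ D) with hs
  set q := s.card with hq
  set g : Fin q → Fin p := fun i => ((s.orderIsoOfFin rfl) i : Fin p) with hg
  have gmono : StrictMono g := fun i j hij =>
    Subtype.coe_lt_coe.2 ((s.orderIsoOfFin rfl).strictMono hij)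
  have ginj : Function.Injective g := gmono.injective
  have gmem : ∀ i, g i ∈ s := fun i => ((s.orderIsoOfFin rfl) i).2
  have gsurj : ∀ j ∈ s, ∃ i, g i = j := by
    intro j hj
    exact ⟨(s.orderIsoOfFin rfl).symm ⟨j, hj⟩, by
      show (((s.orderIsoOfFin rfl) ((s.orderIsoOfFin rfl).symm ⟨j, hj⟩) : {x // x ∈ s}) : Fin p) = j
      rw [OrderIso.apply_symm_apply]⟩
  -- disjointness facts
  have hd1 := List.pairwise_cons.1 hK.disj
  have hd2 := List.pairwise_cons.1 hd1.2
  have hd3 := List.pairwise_cons.1 hd2.2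
  have hd4 := List.pairwise_cons.1 hd3.2
  have dBN : Disjoint (Set.range b) N := hd1.1 N (by simp)
  have dBL : Disjoint (Set.range b) L := hd1.1 L (by simp)
  have dBR : Disjoint (Set.range b) R := hd1.1 R (by simp)
  have dBC : Disjoint (Set.range b) C := hd1.1 C (by simp)
  have dNL : Disjoint N L := hd2.1 L (by simp)
  have dNR : Disjoint N R := hd2.1 R (by simp)
  have dNC : Disjoint N C := hd2.1 C (by simp)
  have dLR : Disjoint L R := hd3.1 R (by simp)
  have dLC : Disjoint L C := hd3.1 C (by simp)
  have dRC : Disjoint R C := hd4.1 C (by simp)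
  set A1 : V → Prop := fun v => ∀ j ∈ s, G.Adj v (b j) with hA1
  set A0 : V → Prop := fun v => ∀ j ∈ s, ¬ G.Adj v (b j) with hA0
  set N' : Set V := N ∪ (b '' {j | j ∉ s}) ∪ {v | (v ∈ L ∪ R) ∧ A1 v} with hN'
  set L' : Set V := {v | v ∈ L ∧ ¬ A1 v ∧ ¬ A0 v} with hL'
  set R' : Set V := {v | v ∈ R ∧ ¬ A1 v ∧ ¬ A0 v} with hR'
  set C' : Set V := C ∪ {v | (v ∈ L ∪ R) ∧ ¬ A1 v ∧ A0 v} with hC'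
  have hrange' : Set.range (b ∘ g) = B \ D := by
    ext x
    constructor
    · rintro ⟨i, rfl⟩
      have := gmem i
      rw [hs, Finset.mem_filter] at this
      exact ⟨hrange ▸ Set.mem_range_self _, this.2⟩
    · rintro ⟨hxB, hxD⟩
      rw [← hrange] at hxB
      obtain ⟨j, rfl⟩ := hxB
      have hj : j ∈ s := by rw [hs, Finset.mem_filter]; exact ⟨Finset.mem_univ _, hxD⟩
      obtain ⟨i, rfl⟩ := gsurj j hj
      exact ⟨i, rfl⟩
  refine ⟨q, b ∘ g, N', L', R', C', hrange', ?_, ?_⟩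
  · constructor
    · exact hK.inj.comp ginj
    · intro i j hij
      exact hK.clique _ _ (fun h => hij (ginj h))
    · -- cover
      intro v hv
      by_cases hvB : v ∈ Set.range b
      · obtain ⟨j, rfl⟩ := hvB
        have hj : j ∉ s := by
          intro hj
          obtain ⟨i, rfl⟩ := gsurj j hj
          exact hv ⟨i, rfl⟩
        exact Or.inl (Or.inl (Or.inl (Or.inl (Or.inr ⟨j, hj, rfl⟩))))
      · rcases hK.cover v hvB with ((hvN | hvLR) | hvR) | hvC
        · exact Or.inl (Or.inl (Or.inl (Or.inl (Or.inl hvN))))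
        · by_cases h1 : A1 v
          · exact Or.inl (Or.inl (Or.inl (Or.inr ⟨Or.inl hvLR, h1⟩)))
          · by_cases h0 : A0 v
            · exact Or.inr (Or.inr ⟨Or.inl hvLR, h1, h0⟩)
            · exact Or.inl (Or.inl (Or.inr ⟨hvLR, h1, h0⟩))
        · by_cases h1 : A1 v
          · exact Or.inl (Or.inl (Or.inl (Or.inr ⟨Or.inr hvR, h1⟩)))
          · by_cases h0 : A0 v
            · exact Or.inr (Or.inr ⟨Or.inr hvR, h1, h0⟩)
            · exact Or.inl (Or.inr ⟨hvR, h1, h0⟩)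
        · exact Or.inr (Or.inl hvC)
    · -- disj
      have d1N : Disjoint (Set.range (b ∘ g)) N' := by
        rw [Set.disjoint_left]
        rintro x ⟨i, rfl⟩ ((hvN | ⟨j, hj, heq⟩) | ⟨hLRmem, _⟩)
        · exact Set.disjoint_left.1 dBN ⟨g i, rfl⟩ hvN
        · exact hj (by rw [hK.inj heq]; exact gmem i)
        · rcases hLRmem with h | h
          · exact Set.disjoint_left.1 dBL ⟨g i, rfl⟩ h
          · exact Set.disjoint_left.1 dBR ⟨g i, rfl⟩ h
      have d1L : Disjoint (Set.range (b ∘ g)) L' := by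
        rw [Set.disjoint_left]
        rintro x ⟨i, rfl⟩ ⟨h, _⟩
        exact Set.disjoint_left.1 dBL ⟨g i, rfl⟩ h
      have d1R : Disjoint (Set.range (b ∘ g)) R' := by
        rw [Set.disjoint_left]
        rintro x ⟨i, rfl⟩ ⟨h, _⟩
        exact Set.disjoint_left.1 dBR ⟨g i, rfl⟩ h
      have d1C : Disjoint (Set.range (b ∘ g)) C' := by
        rw [Set.disjoint_left]
        rintro x ⟨i, rfl⟩ (h | ⟨hLRmem, _⟩)
        · exact Set.disjoint_left.1 dBC ⟨g i, rfl⟩ h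
        · rcases hLRmem with h | h
          · exact Set.disjoint_left.1 dBL ⟨g i, rfl⟩ h
          · exact Set.disjoint_left.1 dBR ⟨g i, rfl⟩ h
      have d2L : Disjoint N' L' := by
        rw [Set.disjoint_left]
        rintro x ((hvN | ⟨j, hj, rfl⟩) | ⟨_, hA1x⟩) ⟨hxL, h1, _⟩
        · exact Set.disjoint_left.1 dNL hvN hxL
        · exact Set.disjoint_left.1 dBL ⟨j, rfl⟩ hxL
        · exact h1 hA1x
      have d2R : Disjoint N' R' := by
        rw [Set.disjoint_left]
        rintro x ((hvN | ⟨j, hj, rfl⟩) | ⟨_, hA1x⟩) ⟨hxR, h1, _⟩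
        · exact Set.disjoint_left.1 dNR hvN hxR
        · exact Set.disjoint_left.1 dBR ⟨j, rfl⟩ hxR
        · exact h1 hA1x
      have d2C : Disjoint N' C' := by
        rw [Set.disjoint_left]
        rintro x ((hvN | ⟨j, hj, rfl⟩) | ⟨hLRmem, hA1x⟩) (hC | ⟨hLR2, h1, _⟩)
        · exact Set.disjoint_left.1 dNC hvN hC
        · rcases hLR2 with h | h
          · exact Set.disjoint_left.1 dNL hvN h
          · exact Set.disjoint_left.1 dNR hvN h
        · exact Set.disjoint_left.1 dBC ⟨j, rfl⟩ hC
        · rcases hLR2 with h | h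
          · exact Set.disjoint_left.1 dBL ⟨j, rfl⟩ h
          · exact Set.disjoint_left.1 dBR ⟨j, rfl⟩ h
        · rcases hLRmem with h | h
          · exact Set.disjoint_left.1 dLC h hC
          · exact Set.disjoint_left.1 dRC h hC
        · exact h1 hA1x
      have d3R : Disjoint L' R' := by
        rw [Set.disjoint_left]
        rintro x ⟨hxL, _⟩ ⟨hxR, _⟩
        exact Set.disjoint_left.1 dLR hxL hxR
      have d3C : Disjoint L' C' := by
        rw [Set.disjoint_left]
        rintro x ⟨hxL, _, h0⟩ (hC | ⟨_, _, hA0x⟩)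
        · exact Set.disjoint_left.1 dLC hxL hC
        · exact h0 hA0x
      have d4C : Disjoint R' C' := by
        rw [Set.disjoint_left]
        rintro x ⟨hxR, _, h0⟩ (hC | ⟨_, _, hA0x⟩)
        · exact Set.disjoint_left.1 dRC hxR hC
        · exact h0 hA0x
      have dis1 : ∀ a' ∈ [N', L', R', C'], Disjoint (Set.range (b ∘ g)) a' := by
        intro a' ha'
        simp only [List.mem_cons, List.not_mem_nil, or_false] at ha'
        rcases ha' with rfl | rfl | rfl | rfl
        exacts [d1N, d1L, d1R, d1C]
      have dis2 : ∀ a' ∈ [L', R', C'], Disjoint N' a' := by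
        intro a' ha'
        simp only [List.mem_cons, List.not_mem_nil, or_false] at ha'
        rcases ha' with rfl | rfl | rfl
        exacts [d2L, d2R, d2C]
      have dis3 : ∀ a' ∈ [R', C'], Disjoint L' a' := by
        intro a' ha'
        simp only [List.mem_cons, List.not_mem_nil, or_false] at ha'
        rcases ha' with rfl | rfl
        exacts [d3R, d3C]
      have dis4 : ∀ a' ∈ [C'], Disjoint R' a' := by
        intro a' ha'
        simp only [List.mem_cons, List.not_mem_nil, or_false] at ha'
        rcases ha' with rfl
        exact d4C
      exact List.Pairwise.cons dis1 (List.Pairwise.cons dis2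
        (List.Pairwise.cons dis3 (List.Pairwise.cons dis4 (by simp))))
    · -- nAdj
      rintro v hv i
      rcases hv with (hvN | ⟨j, hj, rfl⟩) | ⟨_, h1⟩
      · exact hK.nAdj v hvN _
      · refine hK.clique j (g i) (fun h => hj ?_)
        rw [h]; exact gmem i
      · exact h1 _ (gmem i)
    · -- cNotAdj
      rintro v hv i
      rcases hv with hvC | ⟨_, _, h0⟩
      · exact hK.cNotAdj v hvC _
      · exact h0 _ (gmem i)
    · -- lrAdj
      rintro v hv
      have h0 : ¬ A0 v := by rcases hv with ⟨_, _, h⟩ | ⟨_, _, h⟩ <;> exact h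
      simp only [hA0, not_forall, Classical.not_imp, not_not] at h0
      obtain ⟨j, hj, hadj⟩ := h0
      obtain ⟨i, rfl⟩ := gsurj j hj
      exact ⟨i, hadj⟩
    · -- lrNotAll
      rintro v hv
      have h1 : ¬ A1 v := by rcases hv with ⟨_, h, _⟩ | ⟨_, h, _⟩ <;> exact h
      simp only [hA1, not_forall, Classical.not_imp, not_not] at h1
      obtain ⟨j, hj, hnadj⟩ := h1
      obtain ⟨i, rfl⟩ := gsurj j hj
      exact ⟨i, hnadj⟩
    · -- rFirst
      rintro r ⟨hrR, h1, _⟩ i hi hadj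
      refine h1 (fun j hj => ?_)
      obtain ⟨m, rfl⟩ := gsurj j hj
      have him : i ≤ m := by
        have : i.val ≤ m.val := by omega
        exact this
      exact (rClosure hK hrR (g i) (g m) (gmono.monotone him) hadj.symm).symm
    · -- lLast
      rintro x ⟨hxL, h1, _⟩ i hi hadj
      refine h1 (fun j hj => ?_)
      obtain ⟨m, rfl⟩ := gsurj j hj
      have hmi : m ≤ i := by
        have h2 : m.val < q := m.isLt
        have : m.val ≤ i.val := by omega
        exact this
      exact (lClosure hK hxL (g m) (g i) (gmono.monotone hmi) hadj.symm).symm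
    · -- rMono
      rintro i j hij r ⟨hrR, _, _⟩ hadj
      have : i ≤ j := by
        have : i.val ≤ j.val := by omega
        exact this
      exact rClosure hK hrR (g i) (g j) (gmono.monotone this) hadj
    · -- lMono
      rintro i j hij x ⟨hxL, _, _⟩ hadj
      have : i ≤ j := by
        have : i.val ≤ j.val := by omega
        exact this
      exact lClosure hK hxL (g i) (g j) (gmono.monotone this) hadj
  · -- simplicity
    rcases hLR with h | h
    · left; rw [hL']; ext v; simp only [Set.mem_setOf_eq, Set.mem_empty_iff_false, iff_false]
      rintro ⟨hv, _⟩; rw [h] at hv; exact hv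
    · right; rw [hR']; ext v; simp only [Set.mem_setOf_eq, Set.mem_empty_iff_false, iff_false]
      rintro ⟨hv, _⟩; rw [h] at hv; exact hv

/-- In a reduced positive instance of the bi-clique chain completion problem
whose bcc-clean simple `K`-joins have at most `2(k + 1)` vertices, every
simple `K`-join has at most `3k² + 6k + 2` vertices. -/
theorem bcc_simple_kjoin_size_bound [Fintype V] (G : SimpleGraph V) (k : ℕ)
    (hpos : ∃ F : Finset (Sym2 V), IsBccKCompletion G k F)
    (hred : ∀ u v : V, u ≠ v → ¬ G.Adj u v →
      {w : V | IsInd3 G u v w}.ncard ≤ k ∧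
      {e : Sym2 V | ∃ a b : V, e = s(a, b) ∧ IsInducedC4 G u a v b}.ncard ≤ k)
    (hclean : ∀ B : Set V, IsSimpleKJoin G B → IsBccClean G B →
      B.ncard ≤ 2 * (k + 1)) :
    ∀ B : Set V, IsSimpleKJoin G B → B.ncard ≤ 3 * k ^ 2 + 6 * k + 2 := by
  classical
  intro B hB
  obtain ⟨F, hFd, hFne, hFcard, hFbcc⟩ := hpos
  set D := {x : V | InInd3 G x ∨ InC4 G x} with hD
  have hDcard : D.ncard ≤ k * (3 * k + 2) :=
    dirty_bound G k F hFd hFne hFcard hFbcc hred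
  have hB' := restrict_simpleKJoin hB D
  have hbccclean : IsBccClean G (B \ D) := by
    intro x hx
    have hnx : ¬ (InInd3 G x ∨ InC4 G x) := hx.2
    exact ⟨fun h => hnx (Or.inl h), fun h => hnx (Or.inr h)⟩
  have h1 : (B \ D).ncard ≤ 2 * (k + 1) := hclean _ hB' hbccclean
  have h2 : B.ncard ≤ (B \ D).ncard + D.ncard := by
    calc B.ncard ≤ ((B \ D) ∪ D).ncard := by
          refine Set.ncard_le_ncard (fun x hx => ?_) (Set.toFinite _)
          by_cases hxD : x ∈ D
          · exact Or.inr hxD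
          · exact Or.inl ⟨hx, hxD⟩
      _ ≤ (B \ D).ncard + D.ncard := Set.ncard_union_le _ _
  nlinarith [h1, h2, hDcard]
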